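/- Let A be as in the single-eigenvalue setup. Then for all y, y' ∈ ℝ^{n₀+r}: (1) the Hausdorff distance with respect to D_A between the fibers satisfies HD(π_A⁻¹(y), π_A⁻¹(y')) = |y − y'|^{1/λ} (Euclidean norm on ℝ^{n₀+r}); (2) for every point p ∈ π_A⁻¹(y), the distance inf{ D_A(p, q) : q ∈ π_A⁻¹(y') } = |y − y'|^{1/λ}. -/

import Mathlib

open scoped NNReal ENNReal

noncomputable section

/-- Action of a matrix on Euclidean space. -/
def matVec {ι : Type*} [Fintype ι] (M : Matrix ι ι ℝ) (v : EuclideanSpace ℝ ι) :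
    EuclideanSpace ℝ ι :=
  (WithLp.equiv 2 (ι → ℝ)).symm (M.mulVec (WithLp.equiv 2 (ι → ℝ) v))

open Classical in
/-- The parabolic visual quasimetric `D_A` associated with a matrix `A`:
`D_A x x = 0`, and for `x ≠ y`, `D_A x y = eᵗ` where `t` is the smallest real number with
`‖exp(-tA)(x-y)‖ = 1`. -/
def parabolicD {ι : Type*} [Fintype ι] [DecidableEq ι] (A : Matrix ι ι ℝ)
    (x y : EuclideanSpace ℝ ι) : ℝ :=
  if x = y then 0
  else Real.exp (sInf {t : ℝ | ‖matVec (NormedSpace.exp ((-t) • A)) (x - y)‖ = 1})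

/-- The nilpotent part: within each Jordan block `i`, ones on the superdiagonal. -/
def jordanNB {r : ℕ} (sz : Fin r → ℕ) :
    Matrix (Σ i : Fin r, Fin (sz i)) (Σ i : Fin r, Fin (sz i)) ℝ :=
  fun p q => if p.1 = q.1 ∧ (q.2 : ℕ) = (p.2 : ℕ) + 1 then 1 else 0

/-- The single-eigenvalue Jordan-form matrix
`A = diag(λ I_{n₀}, λ I_{n₁} + N, …, λ I_{n_r} + N)`. -/
def singleA (n₀ : ℕ) {r : ℕ} (sz : Fin r → ℕ) (lam : ℝ) :
    Matrix (Fin n₀ ⊕ Σ i : Fin r, Fin (sz i)) (Fin n₀ ⊕ Σ i : Fin r, Fin (sz i)) ℝ :=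
  lam • (1 : Matrix _ _ ℝ) + Matrix.fromBlocks 0 0 0 (jordanNB sz)

/-- The projection `π_A : ℝⁿ → ℝ^{n₀+r}`, `p = (z,(x₁,y₁),…,(x_r,y_r)) ↦ (z, y₁, …, y_r)`,
recording the `z`-coordinates and the last coordinate of each Jordan block. -/
def piSingle (n₀ : ℕ) {r : ℕ} (sz : Fin r → ℕ) (hsz : ∀ i, 2 ≤ sz i)
    (p : EuclideanSpace ℝ (Fin n₀ ⊕ Σ i : Fin r, Fin (sz i))) :
    EuclideanSpace ℝ (Fin n₀ ⊕ Fin r) :=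
  (WithLp.equiv 2 _).symm (fun j => match j with
    | Sum.inl a => p (Sum.inl a)
    | Sum.inr i => p (Sum.inr ⟨i, ⟨sz i - 1, by have := hsz i; omega⟩⟩))

/- ### Auxiliary material -/

open NormedSpace
open scoped Nat

attribute [local instance] Matrix.linftyOpSemiNormedRing Matrix.linftyOpNormedRing
  Matrix.linftyOpNormedAlgebra

section Aux

lemma mulVec_exp_of_row_eq_zero {ι : Type*} [Fintype ι] [DecidableEq ι]
    (M : Matrix ι ι ℝ) (j : ι) (hM : ∀ k, M j k = 0) (v : ι → ℝ) :
    ((NormedSpace.exp M).mulVec v) j = v j := by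
  classical
  let L0 : Matrix ι ι ℝ →ₗ[ℝ] ℝ :=
    { toFun := fun X => X.mulVec v j
      map_add' := fun X Y => by simp [Matrix.add_mulVec]
      map_smul' := fun c X => by simp [Matrix.smul_mulVec] }
  let L : Matrix ι ι ℝ →L[ℝ] ℝ := LinearMap.toContinuousLinearMap L0
  have hsum : HasSum (fun n : ℕ => (n !⁻¹ : ℝ) • M ^ n) (exp M) := by
    rw [exp_eq_tsum ℝ]
    exact (expSeries_summable' (𝕂 := ℝ) M).hasSum
  have h2 : HasSum (fun n : ℕ => L ((n !⁻¹ : ℝ) • M ^ n)) (L (exp M)) := hsum.mapL L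
  have hz : ∀ n : ℕ, n ≠ 0 → L ((n !⁻¹ : ℝ) • M ^ n) = 0 := by
    intro n hn
    obtain ⟨m, rfl⟩ := Nat.exists_eq_succ_of_ne_zero hn
    have : (M ^ (m + 1)).mulVec v j = 0 := by
      rw [pow_succ']
      rw [← Matrix.mulVec_mulVec]
      simp [Matrix.mulVec, dotProduct, hM]
    simp [L, L0, Matrix.smul_mulVec, this]
  have h3 := hasSum_single (f := fun n : ℕ => L ((n !⁻¹ : ℝ) • M ^ n)) 0 (fun b hb => hz b hb)
  have := h2.unique h3
  simpa [L, L0] using this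

variable (n₀ : ℕ) {r : ℕ} (sz : Fin r → ℕ)

/-- The nilpotent block part of `singleA`. -/
def BB : Matrix (Fin n₀ ⊕ Σ i : Fin r, Fin (sz i)) (Fin n₀ ⊕ Σ i : Fin r, Fin (sz i)) ℝ :=
  Matrix.fromBlocks 0 0 0 (jordanNB sz)

lemma exp_smul_one (c : ℝ) {ι : Type*} [Fintype ι] [DecidableEq ι] :
    exp (c • (1 : Matrix ι ι ℝ)) = Real.exp c • (1 : Matrix ι ι ℝ) := by
  have h1 : c • (1 : Matrix ι ι ℝ) = algebraMap ℝ (Matrix ι ι ℝ) c :=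
    (Algebra.algebraMap_eq_smul_one c).symm
  erw [h1, ← algebraMap_exp_comm, ← Real.exp_eq_exp_ℝ, Algebra.algebraMap_eq_smul_one]

lemma exp_split (lam t : ℝ) :
    exp ((-t) • singleA n₀ sz lam)
      = Real.exp (-t * lam) • exp ((-t) • BB n₀ sz) := by
  have hA : (-t) • singleA n₀ sz lam = (-t * lam) • (1 : Matrix _ _ ℝ) + (-t) • BB n₀ sz := by
    simp [singleA, BB, smul_add, smul_smul]
  have hc : Commute ((-t * lam) • (1 : Matrix (Fin n₀ ⊕ Σ i : Fin r, Fin (sz i)) _ ℝ))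
      ((-t) • BB n₀ sz) := ((Commute.one_left _).smul_left _).smul_right _
  erw [hA, exp_add_of_commute hc, exp_smul_one, smul_mul_assoc, one_mul]; rfl

variable (hsz : ∀ i, 2 ≤ sz i)

@[simp] lemma piSingle_inl (p) (a : Fin n₀) :
    piSingle n₀ sz hsz p (Sum.inl a) = p (Sum.inl a) := rfl

@[simp] lemma piSingle_inr (p) (i : Fin r) :
    piSingle n₀ sz hsz p (Sum.inr i)
      = p (Sum.inr ⟨i, ⟨sz i - 1, by have := hsz i; omega⟩⟩) := rfl

lemma piSingle_sub (p q) :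
    piSingle n₀ sz hsz (p - q) = piSingle n₀ sz hsz p - piSingle n₀ sz hsz q := by
  ext j
  cases j with
  | inl a => simp [piSingle]
  | inr i => simp [piSingle]

/-- A canonical lift: put the `F`-coordinates in the `π`-positions, zero elsewhere. -/
def liftF (w : EuclideanSpace ℝ (Fin n₀ ⊕ Fin r)) :
    EuclideanSpace ℝ (Fin n₀ ⊕ Σ i : Fin r, Fin (sz i)) :=
  (WithLp.equiv 2 _).symm (fun j => match j with
    | Sum.inl a => w (Sum.inl a)
    | Sum.inr ⟨i, k⟩ => if (k : ℕ) = sz i - 1 then w (Sum.inr i) else 0)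

lemma piSingle_liftF (w) : piSingle n₀ sz hsz (liftF n₀ sz w) = w := by
  ext j
  cases j with
  | inl a => rfl
  | inr i => simp [piSingle, liftF]

lemma norm_piSingle_le (v) : ‖piSingle n₀ sz hsz v‖ ≤ ‖v‖ := by
  rw [EuclideanSpace.norm_eq, EuclideanSpace.norm_eq]
  apply Real.sqrt_le_sqrt
  rw [Fintype.sum_sum_type, Fintype.sum_sum_type]
  gcongr with a ha
  · exact le_of_eq rfl
  · rw [← Finset.univ_sigma_univ, Finset.sum_sigma]
    gcongr with i hi
    calc ‖piSingle n₀ sz hsz v (Sum.inr i)‖ ^ 2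
        = ‖v (Sum.inr ⟨i, ⟨sz i - 1, by have := hsz i; omega⟩⟩)‖ ^ 2 := by rw [piSingle_inr]
      _ ≤ ∑ k : Fin (sz i), ‖v (Sum.inr ⟨i, k⟩)‖ ^ 2 := by
          exact Finset.single_le_sum (f := fun k : Fin (sz i) => ‖v (Sum.inr ⟨i, k⟩)‖ ^ 2)
            (fun k _ => by positivity) (Finset.mem_univ _)

omit hsz in
lemma norm_liftF (hsz : ∀ i, 2 ≤ sz i) (w) : ‖liftF n₀ sz (r := r) w‖ = ‖w‖ := by
  rw [EuclideanSpace.norm_eq, EuclideanSpace.norm_eq]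
  congr 1
  rw [Fintype.sum_sum_type, Fintype.sum_sum_type, ← Finset.univ_sigma_univ, Finset.sum_sigma]
  congr 1
  refine Finset.sum_congr rfl fun i _ => ?_
  rw [Finset.sum_eq_single (⟨sz i - 1, by have := hsz i; omega⟩ : Fin (sz i))]
  · simp [liftF]
  · intro k _ hk
    have : (k : ℕ) ≠ sz i - 1 := fun h => hk (Fin.ext h)
    simp [liftF, this]
  · simp

lemma BB_row_inl (a : Fin n₀) (k) : BB n₀ sz (Sum.inl a) k = 0 := by
  cases k <;> simp [BB]

lemma BB_row_last (i : Fin r) (k) :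
    BB n₀ sz (Sum.inr ⟨i, ⟨sz i - 1, by have := hsz i; omega⟩⟩) k = 0 := by
  cases k with
  | inl a => simp [BB]
  | inr b =>
    obtain ⟨i', k'⟩ := b
    simp only [BB, Matrix.fromBlocks_apply₂₂, jordanNB]
    rw [if_neg]
    rintro ⟨rfl, hk⟩
    have h1 := k'.isLt
    have h2 := hsz i
    omega

/-- `exp(s • B)` fixes the `π`-coordinates of any vector. -/
lemma piSingle_matVec_expBB (s : ℝ) (v) :
    piSingle n₀ sz hsz (matVec (exp (s • BB n₀ sz)) v) = piSingle n₀ sz hsz v := by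
  ext j
  have row : ∀ j', (∀ k, (s • BB n₀ sz) j' k = 0) →
      matVec (exp (s • BB n₀ sz)) v j' = v j' := by
    intro j' h
    exact mulVec_exp_of_row_eq_zero _ j' h _
  cases j with
  | inl a =>
    rw [piSingle_inl, piSingle_inl]
    exact row _ (fun k => by simp [Matrix.smul_apply, BB_row_inl n₀ sz])
  | inr i =>
    rw [piSingle_inr, piSingle_inr]
    exact row _ (fun k => by simp [Matrix.smul_apply, BB_row_last n₀ sz hsz])

/-- Linearity of `matVec` in the matrix. -/
def matVecL {ι : Type*} [Fintype ι] (v : EuclideanSpace ℝ ι) :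
    Matrix ι ι ℝ →ₗ[ℝ] EuclideanSpace ℝ ι where
  toFun M := matVec M v
  map_add' M N := by
    ext j
    simp [matVec, Matrix.add_mulVec]
  map_smul' c M := by
    ext j
    simp [matVec, Matrix.smul_mulVec]

lemma matVec_smul {ι : Type*} [Fintype ι] (c : ℝ) (M : Matrix ι ι ℝ) (v) :
    matVec (c • M) v = c • matVec M v := (matVecL v).map_smul c M

lemma matVec_matVec {ι : Type*} [Fintype ι] (M N : Matrix ι ι ℝ) (v) :
    matVec M (matVec N v) = matVec (M * N) v := by
  ext j
  simp [matVec, Matrix.mulVec_mulVec]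

lemma matVec_one {ι : Type*} [Fintype ι] [DecidableEq ι] (v : EuclideanSpace ℝ ι) :
    matVec 1 v = v := by
  ext j
  simp [matVec]

end Aux
section Aux2

variable (n₀ : ℕ) {r : ℕ} (sz : Fin r → ℕ)

lemma jordanNB_pow_support (m : ℕ) (p q) (h : (jordanNB sz ^ m) p q ≠ 0) :
    p.1 = q.1 ∧ (p.2 : ℕ) + m ≤ (q.2 : ℕ) := by
  induction m generalizing q with
  | zero =>
    rw [pow_zero] at h
    by_cases hpq : p = q
    · subst hpq; simp
    · exact absurd (Matrix.one_apply_ne hpq) h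
  | succ m ih =>
    rw [pow_succ] at h
    have : ∃ u, (jordanNB sz ^ m) p u * jordanNB sz u q ≠ 0 := by
      by_contra hc
      push_neg at hc
      exact h (by simpa [Matrix.mul_apply] using Finset.sum_eq_zero fun u _ => hc u)
    obtain ⟨u, hu⟩ := this
    have h1 : (jordanNB sz ^ m) p u ≠ 0 := fun h0 => hu (by simp [h0])
    have h2 : jordanNB sz u q ≠ 0 := fun h0 => hu (by simp [h0])
    obtain ⟨e1, e2⟩ := ih u h1
    have h3 : u.1 = q.1 ∧ (q.2 : ℕ) = (u.2 : ℕ) + 1 := by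
      by_contra hc
      exact h2 (by simp [jordanNB, hc])
    exact ⟨e1.trans h3.1, by omega⟩

lemma jordanNB_pow_eq_zero {m : ℕ} (hm : ∀ i, sz i ≤ m) : jordanNB sz ^ m = 0 := by
  ext p q
  by_contra h
  obtain ⟨h1, h2⟩ := jordanNB_pow_support sz m p q (by simpa using h)
  have := q.2.isLt
  have := hm q.1
  omega

lemma BB_pow_succ (m : ℕ) :
    BB n₀ sz ^ (m + 1) = Matrix.fromBlocks 0 0 0 (jordanNB sz ^ (m + 1)) := by
  induction m with
  | zero => simp [BB]
  | succ m ih =>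
    rw [pow_succ, ih, BB, Matrix.fromBlocks_multiply, ← pow_succ]
    simp

lemma BB_pow_eq_zero (hr : 0 < r) {m : ℕ} (hm : ∀ i, sz i + 1 ≤ m) : BB n₀ sz ^ m = 0 := by
  obtain ⟨m', rfl⟩ : ∃ m', m = m' + 1 := ⟨m - 1, by have := hm ⟨0, hr⟩; omega⟩
  rw [BB_pow_succ, jordanNB_pow_eq_zero sz (fun i => by have := hm i; omega)]
  simp

end Aux2
section Aux3

variable (n₀ : ℕ) {r : ℕ} (sz : Fin r → ℕ)

/-- Nilpotency degree bound. -/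
def mm : ℕ := Finset.univ.sup sz + 2

lemma BB_pow_eq_zero_of_le (hr : 0 < r) {k : ℕ} (hk : mm sz ≤ k) : BB n₀ sz ^ k = 0 := by
  have h1 : BB n₀ sz ^ (mm sz - 1) = 0 :=
    BB_pow_eq_zero n₀ sz hr fun i => by
      have : sz i ≤ Finset.univ.sup sz := Finset.le_sup (Finset.mem_univ i)
      simp only [mm]; omega
  calc BB n₀ sz ^ k = BB n₀ sz ^ (mm sz - 1) * BB n₀ sz ^ (k - (mm sz - 1)) := by
        rw [← pow_add]; congr 1; simp only [mm] at hk ⊢; omega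
    _ = 0 := by rw [h1, zero_mul]

lemma exp_smul_BB_eq (hr : 0 < r) (s : ℝ) :
    NormedSpace.exp (s • BB n₀ sz)
      = ∑ k ∈ Finset.range (mm sz), (s ^ k * ((k ! : ℝ))⁻¹) • BB n₀ sz ^ k := by
  rw [NormedSpace.exp_eq_tsum ℝ]
  simp only []
  rw [tsum_eq_sum (s := Finset.range (mm sz))
    (fun k hk => by
      rw [smul_pow, BB_pow_eq_zero_of_le n₀ sz hr (by simpa using hk)]
      simp)]
  refine Finset.sum_congr rfl fun k _ => ?_
  rw [smul_pow, smul_smul, mul_comm]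

lemma norm_matVec_expBB_le (hr : 0 < r) (s : ℝ) (v) :
    ‖matVec (NormedSpace.exp (s • BB n₀ sz)) v‖
      ≤ ∑ k ∈ Finset.range (mm sz), |s| ^ k * ((k ! : ℝ))⁻¹ * ‖matVec (BB n₀ sz ^ k) v‖ := by
  rw [exp_smul_BB_eq n₀ sz hr]
  have hmap : matVec (∑ k ∈ Finset.range (mm sz), (s ^ k * ((k ! : ℝ))⁻¹) • BB n₀ sz ^ k) v
      = ∑ k ∈ Finset.range (mm sz), matVec ((s ^ k * ((k ! : ℝ))⁻¹) • BB n₀ sz ^ k) v :=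
    map_sum (matVecL v) _ _
  rw [hmap]
  refine (norm_sum_le _ _).trans ?_
  refine Finset.sum_le_sum fun k _ => ?_
  rw [matVec_smul, norm_smul, Real.norm_eq_abs, abs_mul, abs_pow]
  rw [abs_inv, Nat.abs_cast]

end Aux3
section Aux4

variable (n₀ : ℕ) {r : ℕ} (sz : Fin r → ℕ) (hsz : ∀ i, 2 ≤ sz i) (lam : ℝ)

lemma norm_matVec_exp_eq (t : ℝ) (v) :
    ‖matVec (NormedSpace.exp ((-t) • singleA n₀ sz lam)) v‖
      = Real.exp (-t * lam) * ‖matVec (NormedSpace.exp ((-t) • BB n₀ sz)) v‖ := by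
  rw [exp_split, matVec_smul, norm_smul, Real.norm_eq_abs, abs_of_pos (Real.exp_pos _)]

lemma norm_matVec_exp_ge (t : ℝ) (v) :
    Real.exp (-t * lam) * ‖piSingle n₀ sz hsz v‖
      ≤ ‖matVec (NormedSpace.exp ((-t) • singleA n₀ sz lam)) v‖ := by
  rw [norm_matVec_exp_eq]
  gcongr
  calc ‖piSingle n₀ sz hsz v‖
      = ‖piSingle n₀ sz hsz (matVec (NormedSpace.exp ((-t) • BB n₀ sz)) v)‖ := by
        rw [piSingle_matVec_expBB]
    _ ≤ ‖matVec (NormedSpace.exp ((-t) • BB n₀ sz)) v‖ := norm_piSingle_le n₀ sz hsz _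

lemma cont_curve (hr : 0 < r) (v) :
    Continuous fun t : ℝ => ‖matVec (NormedSpace.exp ((-t) • singleA n₀ sz lam)) v‖ := by
  have hB : ∀ t : ℝ, matVec (NormedSpace.exp ((-t) • BB n₀ sz)) v
      = ∑ k ∈ Finset.range (mm sz), ((-t) ^ k * ((k ! : ℝ))⁻¹) • matVec (BB n₀ sz ^ k) v := by
    intro t
    rw [exp_smul_BB_eq n₀ sz hr]
    have hmap : matVec (∑ k ∈ Finset.range (mm sz), ((-t) ^ k * ((k ! : ℝ))⁻¹) • BB n₀ sz ^ k) v
        = ∑ k ∈ Finset.range (mm sz), matVec (((-t) ^ k * ((k ! : ℝ))⁻¹) • BB n₀ sz ^ k) v :=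
      map_sum (matVecL v) _ _
    rw [hmap]
    exact Finset.sum_congr rfl fun k _ => matVec_smul _ _ _
  have h1 : Continuous fun t : ℝ =>
      ‖matVec (NormedSpace.exp ((-t) • BB n₀ sz)) v‖ := by
    simp only [hB]
    refine continuous_norm.comp ?_
    refine continuous_finset_sum _ fun k _ => ?_
    exact (((continuous_neg.pow k).mul continuous_const).smul continuous_const)
  have h2 : Continuous fun t : ℝ => Real.exp (-t * lam) :=
    Real.continuous_exp.comp ((continuous_neg).mul continuous_const)
  have := h2.mul h1
  refine this.congr fun t => ?_
  rw [norm_matVec_exp_eq]; rfl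

/-- The level set `‖exp(-tA)v‖ = 1` is nonempty whenever `π v ≠ 0`. -/
lemma exists_root (hlam : 0 < lam) (hr : 0 < r) (v)
    (hv : piSingle n₀ sz hsz v ≠ 0) :
    ∃ t : ℝ, ‖matVec (NormedSpace.exp ((-t) • singleA n₀ sz lam)) v‖ = 1 := by
  set f := fun t : ℝ => ‖matVec (NormedSpace.exp ((-t) • singleA n₀ sz lam)) v‖ with hf
  have hd : 0 < ‖piSingle n₀ sz hsz v‖ := norm_pos_iff.2 hv
  set t₀ := Real.log ‖piSingle n₀ sz hsz v‖ / lam with ht₀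
  have hexp0 : Real.exp (-t₀ * lam) * ‖piSingle n₀ sz hsz v‖ = 1 := by
    rw [ht₀, neg_mul, div_mul_cancel₀ _ (ne_of_gt hlam), Real.exp_neg, Real.exp_log hd]
    exact inv_mul_cancel₀ (ne_of_gt hd)
  have hft₀ : 1 ≤ f t₀ := hexp0 ▸ norm_matVec_exp_ge n₀ sz hsz lam t₀ v
  -- upper bound: find t₂ ≥ t₀ with f t₂ ≤ 1
  have key : ∀ k : ℕ, Filter.Tendsto (fun t : ℝ => Real.exp (-t * lam) * t ^ k)
      Filter.atTop (nhds 0) := by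
    intro k
    have h1 : Filter.Tendsto (fun u : ℝ => u ^ k * Real.exp (-u)) Filter.atTop (nhds 0) :=
      Real.tendsto_pow_mul_exp_neg_atTop_nhds_zero k
    have h2 : Filter.Tendsto (fun t : ℝ => lam * t) Filter.atTop Filter.atTop :=
      Filter.Tendsto.const_mul_atTop hlam Filter.tendsto_id
    have h3 := (h1.comp h2).const_mul ((lam ^ k)⁻¹)
    rw [mul_zero] at h3
    refine h3.congr fun t => ?_
    have hlk : (lam : ℝ) ^ k ≠ 0 := pow_ne_zero k (ne_of_gt hlam)
    simp only [Function.comp]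
    rw [mul_pow, show -(lam * t) = -t * lam by ring]
    field_simp
  have hg : Filter.Tendsto (fun t : ℝ => ∑ k ∈ Finset.range (mm sz),
      (Real.exp (-t * lam) * t ^ k) * (((k ! : ℝ))⁻¹ * ‖matVec (BB n₀ sz ^ k) v‖))
      Filter.atTop (nhds 0) := by
    have := tendsto_finset_sum (Finset.range (mm sz))
      (fun k _ => (key k).mul_const (((k ! : ℝ))⁻¹ * ‖matVec (BB n₀ sz ^ k) v‖))
    simpa using this
  have hev : ∀ᶠ t : ℝ in Filter.atTop, f t ≤ 1 ∧ t₀ ≤ t := by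
    have h1 := hg.eventually_lt_const (by norm_num : (0:ℝ) < 1)
    filter_upwards [h1, Filter.eventually_ge_atTop t₀, Filter.eventually_ge_atTop (0:ℝ)]
      with t h1t h2t h3t
    refine ⟨?_, h2t⟩
    have hb : f t ≤ ∑ k ∈ Finset.range (mm sz),
        (Real.exp (-t * lam) * t ^ k) * (((k ! : ℝ))⁻¹ * ‖matVec (BB n₀ sz ^ k) v‖) := by
      rw [hf]
      simp only []
      rw [norm_matVec_exp_eq]
      calc Real.exp (-t * lam) * ‖matVec (NormedSpace.exp ((-t) • BB n₀ sz)) v‖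
          ≤ Real.exp (-t * lam) * ∑ k ∈ Finset.range (mm sz),
              |(-t)| ^ k * ((k ! : ℝ))⁻¹ * ‖matVec (BB n₀ sz ^ k) v‖ := by
            gcongr
            exact norm_matVec_expBB_le n₀ sz hr (-t) v
        _ = _ := by
            rw [Finset.mul_sum]
            refine Finset.sum_congr rfl fun k _ => ?_
            rw [abs_neg, abs_of_nonneg h3t]
            ring
    exact hb.trans h1t.le
  obtain ⟨t₂, ht₂f, ht₂⟩ := hev.exists
  have hsub := intermediate_value_Icc' ht₂ ((cont_curve n₀ sz lam hr v).continuousOn)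
  have h1 : (1:ℝ) ∈ Set.Icc (f t₂) (f t₀) := ⟨ht₂f, hft₀⟩
  obtain ⟨t, _, htf⟩ := hsub h1
  exact ⟨t, htf⟩

end Aux4
section Aux5

variable (n₀ : ℕ) {r : ℕ} (sz : Fin r → ℕ) (hsz : ∀ i, 2 ≤ sz i) (lam : ℝ)

lemma lower_bound_mem (hlam : 0 < lam) (p q)
    (hne : piSingle n₀ sz hsz p ≠ piSingle n₀ sz hsz q) (t : ℝ)
    (ht : ‖matVec (NormedSpace.exp ((-t) • singleA n₀ sz lam)) (p - q)‖ = 1) :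
    Real.log ‖piSingle n₀ sz hsz p - piSingle n₀ sz hsz q‖ / lam ≤ t := by
  set d := piSingle n₀ sz hsz p - piSingle n₀ sz hsz q with hdd
  have hd : 0 < ‖d‖ := norm_pos_iff.2 (sub_ne_zero.2 hne)
  have hge := norm_matVec_exp_ge n₀ sz hsz lam t (p - q)
  rw [piSingle_sub, ← hdd, ht] at hge
  have he := Real.exp_pos (t * lam)
  rw [neg_mul, Real.exp_neg] at hge
  have h2 : ‖d‖ ≤ Real.exp (t * lam) := by
    have h3 := mul_le_mul_of_nonneg_left hge he.le
    rwa [mul_one, ← mul_assoc, mul_inv_cancel₀ he.ne', one_mul] at h3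
  rw [div_le_iff₀ hlam]
  exact (Real.log_le_iff_le_exp hd).2 h2

lemma parabolicD_ge (hlam : 0 < lam) (hr : 0 < r) (p q)
    (hne : piSingle n₀ sz hsz p ≠ piSingle n₀ sz hsz q) :
    ‖piSingle n₀ sz hsz p - piSingle n₀ sz hsz q‖ ^ (1 / lam)
      ≤ parabolicD (singleA n₀ sz lam) p q := by
  have hpq : p ≠ q := fun h => hne (by rw [h])
  have hd : 0 < ‖piSingle n₀ sz hsz p - piSingle n₀ sz hsz q‖ :=
    norm_pos_iff.2 (sub_ne_zero.2 hne)
  rw [parabolicD, if_neg hpq, Real.rpow_def_of_pos hd, mul_one_div]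
  apply Real.exp_le_exp.2
  have hvne : piSingle n₀ sz hsz (p - q) ≠ 0 := by
    rw [piSingle_sub]; exact sub_ne_zero.2 hne
  obtain ⟨t, htmem⟩ := exists_root n₀ sz hsz lam hlam hr (p - q) hvne
  exact le_csInf ⟨t, htmem⟩ fun b hb => lower_bound_mem n₀ sz hsz lam hlam p q hne b hb

lemma exists_optimal (hlam : 0 < lam) (hr : 0 < r) (p) (c)
    (hne : piSingle n₀ sz hsz p ≠ c) :
    ∃ q, piSingle n₀ sz hsz q = c ∧
      parabolicD (singleA n₀ sz lam) p q = ‖piSingle n₀ sz hsz p - c‖ ^ (1 / lam) := by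
  set d := piSingle n₀ sz hsz p - c with hdd
  have hd : 0 < ‖d‖ := norm_pos_iff.2 (sub_ne_zero.2 hne)
  set t₀ := Real.log ‖d‖ / lam with ht₀
  set w := matVec (NormedSpace.exp (t₀ • BB n₀ sz)) (liftF n₀ sz d) with hw
  have hexp0 : Real.exp (-t₀ * lam) * ‖d‖ = 1 := by
    rw [ht₀, neg_mul, div_mul_cancel₀ _ (ne_of_gt hlam), Real.exp_neg, Real.exp_log hd]
    exact inv_mul_cancel₀ (ne_of_gt hd)
  have hq : piSingle n₀ sz hsz (p - w) = c := by
    rw [piSingle_sub, hw, piSingle_matVec_expBB n₀ sz hsz, piSingle_liftF n₀ sz hsz, hdd]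
    abel
  refine ⟨p - w, hq, ?_⟩
  have hsub : p - (p - w) = w := sub_sub_cancel _ _
  have hone : matVec (NormedSpace.exp ((-t₀) • BB n₀ sz)) w = liftF n₀ sz d := by
    erw [hw, matVec_matVec,
      ← NormedSpace.exp_add_of_commute (((Commute.refl (BB n₀ sz)).smul_left _).smul_right _),
      ← add_smul, neg_add_cancel, zero_smul, NormedSpace.exp_zero, matVec_one]
  have hmem : ‖matVec (NormedSpace.exp ((-t₀) • singleA n₀ sz lam)) (p - (p - w))‖ = 1 := by
    rw [hsub, norm_matVec_exp_eq, hone, norm_liftF n₀ sz hsz, hexp0]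
  have hne' : p ≠ p - w := by
    intro h
    apply hne
    rw [← hq, ← h]
  have hlb : ∀ b ∈ {t : ℝ | ‖matVec (NormedSpace.exp ((-t) • singleA n₀ sz lam))
      (p - (p - w))‖ = 1}, t₀ ≤ b := by
    intro b hb
    have := lower_bound_mem n₀ sz hsz lam hlam p (p - w)
      (by rw [hq]; exact hne) b hb
    rwa [hq, ← hdd, ← ht₀] at this
  have hinf : sInf {t : ℝ | ‖matVec (NormedSpace.exp ((-t) • singleA n₀ sz lam))
      (p - (p - w))‖ = 1} = t₀ :=
    le_antisymm (csInf_le ⟨t₀, hlb⟩ hmem) (le_csInf ⟨t₀, hmem⟩ hlb)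
  rw [parabolicD, if_neg hne', hinf, Real.rpow_def_of_pos hd, mul_one_div, ht₀]

lemma parabolicD_symm {ι : Type*} [Fintype ι] [DecidableEq ι] (A : Matrix ι ι ℝ) (x y) :
    parabolicD A x y = parabolicD A y x := by
  by_cases h : x = y
  · subst h; rfl
  · have h' : y ≠ x := Ne.symm h
    simp only [parabolicD, if_neg h, if_neg h']
    congr 2
    refine Set.ext fun t => ?_
    have hkey : ∀ M : Matrix ι ι ℝ, matVec M (x - y) = -matVec M (y - x) := by
      intro M
      ext j
      have : (x - y : EuclideanSpace ℝ ι) = -(y - x) := (neg_sub _ _).symm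
      rw [this]
      show (M.mulVec (-(WithLp.equiv 2 (ι → ℝ) (y - x)))) j = _
      rw [Matrix.mulVec_neg]
      rfl
    simp only [Set.mem_setOf_eq, hkey, norm_neg]

lemma inf_fiber (hlam : 0 < lam) (hr : 0 < r) (b c) (p)
    (hp : piSingle n₀ sz hsz p = b) :
    (⨅ (q : EuclideanSpace ℝ (Fin n₀ ⊕ Σ i : Fin r, Fin (sz i)))
        (_ : piSingle n₀ sz hsz q = c),
      ENNReal.ofReal (parabolicD (singleA n₀ sz lam) p q))
      = ENNReal.ofReal (‖b - c‖ ^ (1 / lam)) := by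
  by_cases hbc : b = c
  · subst hbc
    have h0 : ‖b - b‖ ^ (1 / lam) = (0 : ℝ) := by
      rw [sub_self, norm_zero, Real.zero_rpow (one_div_ne_zero (ne_of_gt hlam))]
    rw [h0, ENNReal.ofReal_zero]
    refine le_antisymm ?_ zero_le'
    refine (iInf₂_le p hp).trans ?_
    rw [parabolicD, if_pos rfl, ENNReal.ofReal_zero]
  · apply le_antisymm
    · obtain ⟨q, hq, hD⟩ := exists_optimal n₀ sz hsz lam hlam hr p c (by rw [hp]; exact hbc)
      refine (iInf₂_le q hq).trans ?_
      rw [hD, hp]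
    · refine le_iInf fun q => le_iInf fun hq => ?_
      apply ENNReal.ofReal_le_ofReal
      have := parabolicD_ge n₀ sz hsz lam hlam hr p q (by rw [hp, hq]; exact hbc)
      rwa [hp, hq] at this

end Aux5
/-- (1) The Hausdorff distance (w.r.t. `D_A`) between the fibers `π_A⁻¹(y)` and `π_A⁻¹(y')`
equals `|y - y'|^{1/λ}`; (2) every point of `π_A⁻¹(y)` is at `D_A`-distance exactly
`|y - y'|^{1/λ}` from `π_A⁻¹(y')`. -/
theorem hausdorff_distance_of_fibers {n₀ : ℕ} {r : ℕ} (hr : 1 ≤ r) (sz : Fin r → ℕ)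
    (hsz : ∀ i, 2 ≤ sz i) (lam : ℝ) (hlam : 0 < lam)
    (y y' : EuclideanSpace ℝ (Fin n₀ ⊕ Fin r)) :
    (max
        (⨆ (p : EuclideanSpace ℝ (Fin n₀ ⊕ Σ i : Fin r, Fin (sz i)))
            (_ : piSingle n₀ sz hsz p = y),
          ⨅ (q : EuclideanSpace ℝ (Fin n₀ ⊕ Σ i : Fin r, Fin (sz i)))
            (_ : piSingle n₀ sz hsz q = y'),
            ENNReal.ofReal (parabolicD (singleA n₀ sz lam) p q))
        (⨆ (q : EuclideanSpace ℝ (Fin n₀ ⊕ Σ i : Fin r, Fin (sz i)))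
            (_ : piSingle n₀ sz hsz q = y'),
          ⨅ (p : EuclideanSpace ℝ (Fin n₀ ⊕ Σ i : Fin r, Fin (sz i)))
            (_ : piSingle n₀ sz hsz p = y),
            ENNReal.ofReal (parabolicD (singleA n₀ sz lam) p q))
      = ENNReal.ofReal (‖y - y'‖ ^ (1 / lam))) ∧
    ∀ p : EuclideanSpace ℝ (Fin n₀ ⊕ Σ i : Fin r, Fin (sz i)), piSingle n₀ sz hsz p = y →
      (⨅ (q : EuclideanSpace ℝ (Fin n₀ ⊕ Σ i : Fin r, Fin (sz i)))
          (_ : piSingle n₀ sz hsz q = y'),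
        ENNReal.ofReal (parabolicD (singleA n₀ sz lam) p q))
        = ENNReal.ofReal (‖y - y'‖ ^ (1 / lam)) := by
  have hr0 : 0 < r := hr
  constructor
  · have h1 : (⨆ (p : EuclideanSpace ℝ (Fin n₀ ⊕ Σ i : Fin r, Fin (sz i)))
        (_ : piSingle n₀ sz hsz p = y),
        ⨅ (q : EuclideanSpace ℝ (Fin n₀ ⊕ Σ i : Fin r, Fin (sz i)))
        (_ : piSingle n₀ sz hsz q = y'),
        ENNReal.ofReal (parabolicD (singleA n₀ sz lam) p q))
        = ENNReal.ofReal (‖y - y'‖ ^ (1 / lam)) := by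
      apply le_antisymm
      · refine iSup₂_le fun p hp => ?_
        exact (inf_fiber n₀ sz hsz lam hlam hr0 y y' p hp).le
      · refine le_iSup₂_of_le (liftF n₀ sz y) (piSingle_liftF n₀ sz hsz y) ?_
        exact (inf_fiber n₀ sz hsz lam hlam hr0 y y' _ (piSingle_liftF n₀ sz hsz y)).ge
    have h2 : (⨆ (q : EuclideanSpace ℝ (Fin n₀ ⊕ Σ i : Fin r, Fin (sz i)))
        (_ : piSingle n₀ sz hsz q = y'),
        ⨅ (p : EuclideanSpace ℝ (Fin n₀ ⊕ Σ i : Fin r, Fin (sz i)))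
        (_ : piSingle n₀ sz hsz p = y),
        ENNReal.ofReal (parabolicD (singleA n₀ sz lam) p q))
        = ENNReal.ofReal (‖y - y'‖ ^ (1 / lam)) := by
      have hconst : ∀ q : EuclideanSpace ℝ (Fin n₀ ⊕ Σ i : Fin r, Fin (sz i)),
          piSingle n₀ sz hsz q = y' →
          (⨅ (p : EuclideanSpace ℝ (Fin n₀ ⊕ Σ i : Fin r, Fin (sz i)))
            (_ : piSingle n₀ sz hsz p = y),
            ENNReal.ofReal (parabolicD (singleA n₀ sz lam) p q))
            = ENNReal.ofReal (‖y - y'‖ ^ (1 / lam)) := by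
        intro q hq
        have hsymm : (⨅ (p : EuclideanSpace ℝ (Fin n₀ ⊕ Σ i : Fin r, Fin (sz i)))
            (_ : piSingle n₀ sz hsz p = y),
            ENNReal.ofReal (parabolicD (singleA n₀ sz lam) p q))
            = ⨅ (p : EuclideanSpace ℝ (Fin n₀ ⊕ Σ i : Fin r, Fin (sz i)))
            (_ : piSingle n₀ sz hsz p = y),
            ENNReal.ofReal (parabolicD (singleA n₀ sz lam) q p) :=
          iInf_congr fun p => iInf_congr fun _ => by rw [parabolicD_symm]
        rw [hsymm, inf_fiber n₀ sz hsz lam hlam hr0 y' y q hq, norm_sub_rev]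
      apply le_antisymm
      · exact iSup₂_le fun q hq => (hconst q hq).le
      · refine le_iSup₂_of_le (liftF n₀ sz y') (piSingle_liftF n₀ sz hsz y') ?_
        exact (hconst _ (piSingle_liftF n₀ sz hsz y')).ge
    rw [h1, h2, max_self]
  · intro p hp
    exact inf_fiber n₀ sz hsz lam hlam hr0 y y' p hp
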